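/- Euclidean entailment cones are transitive: fix K > 0 and ε ≥ K, and define for x ∈ ℝⁿ with ‖x‖ ≥ ε the cone S_x = {y ∈ ℝⁿ : ‖y‖ ≥ ‖x‖ and Ξ(x,y) ≤ arcsin(K/‖x‖)} ∪ {x}, where cos Ξ(x,y) = ⟨y−x, x⟩/(‖y−x‖·‖x‖). If y ∈ S_x with y ≠ x, then ‖y‖ ≥ ε and S_y ⊆ S_x. -/
import Mathlib

open InnerProductGeometry InnerProductSpace

/-- The Euclidean entailment cone at `x` with parameter `K`:
all `y` with `‖y‖ ≥ ‖x‖` making an angle `Ξ(x,y) = ∠(y − x, x)` at most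
`arcsin(K/‖x‖)` with the axis, together with the apex `x` itself. -/
noncomputable def euclCone {n : ℕ} (K : ℝ) (x : EuclideanSpace ℝ (Fin n)) :
    Set (EuclideanSpace ℝ (Fin n)) :=
  insert x {y | ‖x‖ ≤ ‖y‖ ∧
    InnerProductGeometry.angle (y - x) x ≤ Real.arcsin (K / ‖x‖)}

lemma cos_arcsin_div {K X : ℝ} (hK : 0 < K) (hX : K ≤ X) :
    Real.cos (Real.arcsin (K / X)) = Real.sqrt (X ^ 2 - K ^ 2) / X := by
  have hX0 : 0 < X := hK.trans_le hX
  rw [Real.cos_arcsin]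
  have h1 : 1 - (K / X) ^ 2 = (X ^ 2 - K ^ 2) / X ^ 2 := by field_simp
  rw [h1, Real.sqrt_div (by nlinarith), Real.sqrt_sq hX0.le]

lemma arcsin_mem_Icc {K X : ℝ} (hK : 0 < K) (hX : K ≤ X) :
    Real.arcsin (K / X) ∈ Set.Icc 0 Real.pi := by
  have hX0 : 0 < X := hK.trans_le hX
  constructor
  · exact Real.arcsin_nonneg.mpr (div_nonneg hK.le hX0.le)
  · exact (Real.arcsin_le_pi_div_two _).trans (by linarith [Real.pi_pos])

lemma inner_ge_of_angle_le {n : ℕ} {K : ℝ} (hK : 0 < K)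
    {x u : EuclideanSpace ℝ (Fin n)} (hx : K ≤ ‖x‖) (hu : u ≠ 0)
    (h : InnerProductGeometry.angle u x ≤ Real.arcsin (K / ‖x‖)) :
    ‖u‖ * Real.sqrt (‖x‖ ^ 2 - K ^ 2) ≤ ⟪u, x⟫_ℝ := by
  have hx0 : (0 : ℝ) < ‖x‖ := hK.trans_le hx
  have hu0 : (0 : ℝ) < ‖u‖ := norm_pos_iff.mpr hu
  have hcos : Real.cos (Real.arcsin (K / ‖x‖)) ≤ Real.cos (angle u x) :=
    Real.strictAntiOn_cos.antitoneOn ⟨angle_nonneg u x, angle_le_pi u x⟩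
      (arcsin_mem_Icc hK hx) h
  rw [cos_arcsin_div hK hx, InnerProductGeometry.cos_angle,
    div_le_div_iff₀ hx0 (by positivity)] at hcos
  nlinarith [hcos]

lemma angle_le_of_inner_ge {n : ℕ} {K : ℝ} (hK : 0 < K)
    {x w : EuclideanSpace ℝ (Fin n)} (hx : K ≤ ‖x‖) (hw : w ≠ 0)
    (h : ‖w‖ * Real.sqrt (‖x‖ ^ 2 - K ^ 2) ≤ ⟪w, x⟫_ℝ) :
    InnerProductGeometry.angle w x ≤ Real.arcsin (K / ‖x‖) := by
  have hx0 : (0 : ℝ) < ‖x‖ := hK.trans_le hx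
  have hw0 : (0 : ℝ) < ‖w‖ := norm_pos_iff.mpr hw
  by_contra hcon
  push_neg at hcon
  have hlt : Real.cos (angle w x) < Real.cos (Real.arcsin (K / ‖x‖)) :=
    Real.strictAntiOn_cos (arcsin_mem_Icc hK hx)
      ⟨angle_nonneg w x, angle_le_pi w x⟩ hcon
  rw [cos_arcsin_div hK hx, InnerProductGeometry.cos_angle,
    div_lt_div_iff₀ (by positivity) hx0] at hlt
  nlinarith [hlt]

theorem euclidean_cone_transitivity {n : ℕ} (K ε : ℝ) (hK : 0 < K) (hεK : K ≤ ε)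
    (x y : EuclideanSpace ℝ (Fin n)) (hx : ε ≤ ‖x‖)
    (hy : y ∈ euclCone K x) (hyx : y ≠ x) :
    ε ≤ ‖y‖ ∧ euclCone K y ⊆ euclCone K x := by
  have hKx : K ≤ ‖x‖ := hεK.trans hx
  have hx0 : (0 : ℝ) < ‖x‖ := hK.trans_le hKx
  rcases hy with rfl | ⟨hxy, hangle1⟩
  · exact absurd rfl hyx
  have hKy : K ≤ ‖y‖ := hKx.trans hxy
  have hy0 : (0 : ℝ) < ‖y‖ := hK.trans_le hKy
  have hu : y - x ≠ 0 := sub_ne_zero.mpr hyx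
  refine ⟨hx.trans hxy, ?_⟩
  intro z hz
  by_cases hzy : z = y
  · subst hzy
    exact Set.mem_insert_iff.mpr (Or.inr ⟨hxy, hangle1⟩)
  rcases hz with rfl | ⟨hyz, hangle2⟩
  · exact absurd rfl hzy
  by_cases hzx : z = x
  · subst hzx; exact Set.mem_insert _ _
  have hv : z - y ≠ 0 := sub_ne_zero.mpr hzy
  have hw : z - x ≠ 0 := sub_ne_zero.mpr hzx
  refine Set.mem_insert_iff.mpr (Or.inr ⟨hxy.trans hyz, ?_⟩)
  set A := Real.sqrt (‖x‖ ^ 2 - K ^ 2) with hAdef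
  have hA : 0 ≤ A := Real.sqrt_nonneg _
  have hA2 : A ^ 2 = ‖x‖ ^ 2 - K ^ 2 := Real.sq_sqrt (by nlinarith)
  have h1 : ‖y - x‖ * A ≤ ⟪y - x, x⟫_ℝ := inner_ge_of_angle_le hK hKx hu hangle1
  have h2 : ‖z - y‖ * Real.sqrt (‖y‖ ^ 2 - K ^ 2) ≤ ⟪z - y, y⟫_ℝ :=
    inner_ge_of_angle_le hK hKy hv hangle2
  -- key: √(‖y‖² - K²) ≥ A + ‖y - x‖
  have hysq : ‖y‖ ^ 2 = ‖x‖ ^ 2 + 2 * ⟪y - x, x⟫_ℝ + ‖y - x‖ ^ 2 := by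
    have hxy' : x + (y - x) = y := by abel
    have := norm_add_sq_real x (y - x)
    rw [hxy', real_inner_comm] at this
    linarith [this]
  have hkey : A + ‖y - x‖ ≤ Real.sqrt (‖y‖ ^ 2 - K ^ 2) := by
    rw [Real.le_sqrt (by positivity) (by nlinarith [norm_nonneg (y - x)])]
    nlinarith [h1, norm_nonneg (y - x)]
  have h2' : (A + ‖y - x‖) * ‖z - y‖ ≤ ⟪z - y, y⟫_ℝ := by
    calc (A + ‖y - x‖) * ‖z - y‖ ≤ Real.sqrt (‖y‖ ^ 2 - K ^ 2) * ‖z - y‖ :=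
          mul_le_mul_of_nonneg_right hkey (norm_nonneg _)
      _ = ‖z - y‖ * Real.sqrt (‖y‖ ^ 2 - K ^ 2) := mul_comm _ _
      _ ≤ ⟪z - y, y⟫_ℝ := h2
  have hcauchy : ⟪z - y, y - x⟫_ℝ ≤ ‖z - y‖ * ‖y - x‖ := real_inner_le_norm _ _
  have hsplit : ⟪z - x, x⟫_ℝ = ⟪y - x, x⟫_ℝ + ⟪z - y, y⟫_ℝ - ⟪z - y, y - x⟫_ℝ := by
    simp only [inner_sub_left, inner_sub_right]
    ring
  have htri : ‖z - x‖ ≤ ‖y - x‖ + ‖z - y‖ := by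
    have heq : z - x = (y - x) + (z - y) := by abel
    calc ‖z - x‖ = ‖(y - x) + (z - y)‖ := by rw [heq]
      _ ≤ ‖y - x‖ + ‖z - y‖ := norm_add_le _ _
  have hfinal : ‖z - x‖ * A ≤ ⟪z - x, x⟫_ℝ := by
    have := mul_le_mul_of_nonneg_left htri hA
    nlinarith [h1, h2', hcauchy, hsplit, hA, norm_nonneg (y - x), norm_nonneg (z - y)]
  exact angle_le_of_inner_ge hK hKx hw hfinal
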